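/- Let fhat be a proper probability generating function with fhat'(1) = infinity, smallest fixed point qhat in [0,1), and iterates fhat(t,s). Let b > 1 and let psi : (0,infinity) -> (0,1) be continuous and strictly increasing with psi(u) -> 0 as u -> 0+ and psi(u) -> 1 as u -> infinity, such that for every u in (0,infinity) and every real sequence (u_t) with u_t -> u, fhat(t, exp(-exp(-u_t * b^t))) -> qhat + (1-qhat)*psi(u) as t -> infinity. For r > 1 define f_r(s) = r*fhat(s/r) with iterates f_r(t,s) = r*fhat(t,s/r). Let r_n > 1 and t_n -> infinity satisfy b^{-t_n} * ln(1/(r_n - 1)) -> y for some y in (0,infinity). Then: (i) f_{r_n}(t_n,1) - f_{r_n}(t_n,0) converges to (1-qhat)*psi(y); and (ii) for every lambda > 0 and every u in (0,y), (f_{r_n}(t_n, exp(-lambda*exp(-u*b^{t_n}))) - f_{r_n}(t_n,0)) / (f_{r_n}(t_n,1) - f_{r_n}(t_n,0)) converges to psi(u)/psi(y). Probabilistically, P(T_n > t_n) -> (1-qhat)psi(y) and P(b^{-t_n} ln Z_n(t_n) <= u | T_n > t_n) -> psi(u)/psi(y) for u in (0,y). -/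

import Mathlib

open Filter Finset



section PgfAux

variable {phat : ℕ → ℝ} {fhat : ℝ → ℝ}

lemma pgf_summable (hphat : ∀ k, 0 ≤ phat k) (hsum : HasSum phat 1)
    {s : ℝ} (h0 : 0 ≤ s) (h1 : s ≤ 1) : Summable fun k => phat k * s ^ k := by
  refine Summable.of_nonneg_of_le (fun k => mul_nonneg (hphat k) (pow_nonneg h0 k))
    (fun k => ?_) hsum.summable
  calc phat k * s ^ k ≤ phat k * 1 :=
        mul_le_mul_of_nonneg_left (pow_le_one₀ h0 h1) (hphat k)
    _ = phat k := mul_one _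

lemma pgf_one (hphat : ∀ k, 0 ≤ phat k) (hsum : HasSum phat 1)
    (hfhat : ∀ s : ℝ, fhat s = ∑' k, phat k * s ^ k) : fhat 1 = 1 := by
  rw [hfhat 1]
  simp only [one_pow, mul_one]
  exact hsum.tsum_eq

lemma pgf_mono (hphat : ∀ k, 0 ≤ phat k) (hsum : HasSum phat 1)
    (hfhat : ∀ s : ℝ, fhat s = ∑' k, phat k * s ^ k)
    {x y : ℝ} (hx : 0 ≤ x) (hxy : x ≤ y) (hy : y ≤ 1) : fhat x ≤ fhat y := by
  rw [hfhat x, hfhat y]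
  exact Summable.tsum_le_tsum
    (fun k => mul_le_mul_of_nonneg_left (pow_le_pow_left₀ hx hxy k) (hphat k))
    (pgf_summable hphat hsum hx (hxy.trans hy))
    (pgf_summable hphat hsum (hx.trans hxy) hy)

lemma pgf_mem (hphat : ∀ k, 0 ≤ phat k) (hsum : HasSum phat 1)
    (hfhat : ∀ s : ℝ, fhat s = ∑' k, phat k * s ^ k)
    {s : ℝ} (hs : s ∈ Set.Icc (0:ℝ) 1) : fhat s ∈ Set.Icc (0:ℝ) 1 := by
  constructor
  · rw [hfhat s]
    exact tsum_nonneg fun k => mul_nonneg (hphat k) (pow_nonneg hs.1 k)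
  · calc fhat s ≤ fhat 1 := pgf_mono hphat hsum hfhat hs.1 hs.2 le_rfl
      _ = 1 := pgf_one hphat hsum hfhat

lemma pgf_iter_mem (hphat : ∀ k, 0 ≤ phat k) (hsum : HasSum phat 1)
    (hfhat : ∀ s : ℝ, fhat s = ∑' k, phat k * s ^ k)
    (t : ℕ) {s : ℝ} (hs : s ∈ Set.Icc (0:ℝ) 1) : fhat^[t] s ∈ Set.Icc (0:ℝ) 1 := by
  induction t with
  | zero => simpa using hs
  | succ t ih =>
    rw [Function.iterate_succ_apply']
    exact pgf_mem hphat hsum hfhat ih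

lemma pgf_iter_mono (hphat : ∀ k, 0 ≤ phat k) (hsum : HasSum phat 1)
    (hfhat : ∀ s : ℝ, fhat s = ∑' k, phat k * s ^ k)
    (t : ℕ) {x y : ℝ} (hx : x ∈ Set.Icc (0:ℝ) 1) (hy : y ∈ Set.Icc (0:ℝ) 1)
    (hxy : x ≤ y) : fhat^[t] x ≤ fhat^[t] y := by
  induction t with
  | zero => simpa using hxy
  | succ t ih =>
    rw [Function.iterate_succ_apply', Function.iterate_succ_apply']
    exact pgf_mono hphat hsum hfhat (pgf_iter_mem hphat hsum hfhat t hx).1 ih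
      (pgf_iter_mem hphat hsum hfhat t hy).2

lemma pgf_contAt (hphat : ∀ k, 0 ≤ phat k) (hsum : HasSum phat 1)
    (hfhat : ∀ s : ℝ, fhat s = ∑' k, phat k * s ^ k)
    {L : ℝ} (h0 : 0 ≤ L) (h1 : L < 1) : ContinuousAt fhat L := by
  set c : ℝ := (L + 1) / 2 with hc
  have hc1 : c < 1 := by rw [hc]; linarith
  have hLc : L < c := by rw [hc]; linarith
  have hc0 : 0 < c := by rw [hc]; linarith
  have hco : ContinuousOn (fun x => ∑' k, phat k * x ^ k) (Set.Ioo (-c) c) := by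
    refine continuousOn_tsum (u := fun k => c ^ k)
      (fun i => (continuous_const.mul (continuous_pow i)).continuousOn)
      (summable_geometric_of_lt_one hc0.le hc1) (fun n x hx => ?_)
    have hxc : |x| ≤ c := by rw [abs_le]; exact ⟨hx.1.le, hx.2.le⟩
    have hp1 : phat n ≤ 1 := le_hasSum hsum n fun m _ => hphat m
    calc ‖phat n * x ^ n‖ = phat n * |x| ^ n := by
          rw [norm_mul, Real.norm_eq_abs, Real.norm_eq_abs, abs_of_nonneg (hphat n), abs_pow]
      _ ≤ 1 * c ^ n :=
          mul_le_mul hp1 (pow_le_pow_left₀ (abs_nonneg x) hxc n) (pow_nonneg (abs_nonneg x) n)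
            zero_le_one
      _ = c ^ n := one_mul _
  have hco2 : ContinuousOn fhat (Set.Ioo (-c) c) := hco.congr fun x _ => hfhat x
  exact hco2.continuousAt (isOpen_Ioo.mem_nhds ⟨by linarith, hLc⟩)

end PgfAux


section Aux2
variable {phat : ℕ → ℝ} {fhat : ℝ → ℝ} {qhat : ℝ}

lemma pgf_iter_zero_tendsto (hphat : ∀ k, 0 ≤ phat k) (hsum : HasSum phat 1)
    (hfhat : ∀ s : ℝ, fhat s = ∑' k, phat k * s ^ k)
    (hqhat : qhat ∈ Set.Ico (0 : ℝ) 1) (hfix : fhat qhat = qhat)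
    (hqmin : ∀ x ∈ Set.Icc (0 : ℝ) 1, fhat x = x → qhat ≤ x) :
    Tendsto (fun t => fhat^[t] (0:ℝ)) atTop (nhds qhat) := by
  have h01 : (0:ℝ) ∈ Set.Icc (0:ℝ) 1 := by norm_num
  have hq01 : qhat ∈ Set.Icc (0:ℝ) 1 := ⟨hqhat.1, hqhat.2.le⟩
  have hmem : ∀ t, fhat^[t] (0:ℝ) ∈ Set.Icc (0:ℝ) 1 :=
    fun t => pgf_iter_mem hphat hsum hfhat t h01
  have hmono : Monotone fun t => fhat^[t] (0:ℝ) := by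
    refine monotone_nat_of_le_succ fun t => ?_
    rw [Function.iterate_succ_apply]
    exact pgf_iter_mono hphat hsum hfhat t h01 (pgf_mem hphat hsum hfhat h01)
      (pgf_mem hphat hsum hfhat h01).1
  have hle : ∀ t, fhat^[t] (0:ℝ) ≤ qhat := by
    intro t
    induction t with
    | zero => simpa using hqhat.1
    | succ t ih =>
      rw [Function.iterate_succ_apply']
      calc fhat (fhat^[t] 0) ≤ fhat qhat :=
            pgf_mono hphat hsum hfhat (hmem t).1 ih hqhat.2.le
        _ = qhat := hfix
  have hbdd : BddAbove (Set.range fun t => fhat^[t] (0:ℝ)) :=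
    ⟨qhat, by rintro x ⟨t, rfl⟩; exact hle t⟩
  have hL : Tendsto (fun t => fhat^[t] (0:ℝ)) atTop (nhds (⨆ t, fhat^[t] (0:ℝ))) :=
    tendsto_atTop_ciSup hmono hbdd
  set L : ℝ := ⨆ t, fhat^[t] (0:ℝ) with hLdef
  have hLle : L ≤ qhat := ciSup_le hle
  have hL0 : 0 ≤ L := le_trans (hmem 0).1 (le_ciSup hbdd 0)
  have hcont : ContinuousAt fhat L :=
    pgf_contAt hphat hsum hfhat hL0 (lt_of_le_of_lt hLle hqhat.2)
  have h1 : Tendsto (fun t => fhat (fhat^[t] (0:ℝ))) atTop (nhds (fhat L)) :=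
    hcont.tendsto.comp hL
  have h2 : Tendsto (fun t => fhat (fhat^[t] (0:ℝ))) atTop (nhds L) := by
    have : (fun t => fhat (fhat^[t] (0:ℝ))) = fun t => fhat^[t+1] (0:ℝ) := by
      funext t; rw [Function.iterate_succ_apply']
    rw [this]
    exact hL.comp (tendsto_add_atTop_nat 1)
  have hfixL : fhat L = L := tendsto_nhds_unique h1 h2
  have : qhat ≤ L := hqmin L ⟨hL0, hLle.trans hqhat.2.le⟩ hfixL
  have hEq : L = qhat := le_antisymm hLle this
  rwa [hEq] at hL

lemma pgf_key (hphat : ∀ k, 0 ≤ phat k) (hsum : HasSum phat 1)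
    (hfhat : ∀ s : ℝ, fhat s = ∑' k, phat k * s ^ k)
    (hqhat : qhat ∈ Set.Ico (0 : ℝ) 1) {b : ℝ} (hb : 1 < b) {psi : ℝ → ℝ}
    (hpsicont : ContinuousOn psi (Set.Ioi 0))
    (hpsi : ∀ u : ℝ, 0 < u → ∀ ut : ℕ → ℝ, Tendsto ut atTop (nhds u) →
        Tendsto (fun t : ℕ => fhat^[t] (Real.exp (-Real.exp (-ut t * b ^ t))))
          atTop (nhds (qhat + (1 - qhat) * psi u)))
    (t : ℕ → ℕ) (ht : Tendsto t atTop atTop)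
    {u : ℝ} (hu : 0 < u) (v : ℕ → ℝ) (hv : Tendsto v atTop (nhds u)) :
    Tendsto (fun n => fhat^[t n] (Real.exp (-Real.exp (-v n * b ^ t n)))) atTop
      (nhds (qhat + (1 - qhat) * psi u)) := by
  have hmemE : ∀ (x : ℝ), Real.exp (-Real.exp x) ∈ Set.Icc (0:ℝ) 1 := fun x =>
    ⟨(Real.exp_pos _).le, Real.exp_le_one_iff.mpr (neg_nonpos.mpr (Real.exp_pos _).le)⟩
  rw [Metric.tendsto_atTop]
  intro ε hε
  set c : ℝ := qhat + (1 - qhat) * psi u with hcdef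
  have hcontu : ContinuousAt psi u := hpsicont.continuousAt (isOpen_Ioi.mem_nhds hu)
  rw [Metric.continuousAt_iff] at hcontu
  obtain ⟨δ₀, hδ₀, hδ⟩ := hcontu (ε/4) (by linarith)
  set δ : ℝ := min (δ₀/2) (u/2) with hδdef
  have hδpos : 0 < δ := lt_min (by linarith) (by linarith)
  have hδu : 0 < u - δ := by
    have : δ ≤ u/2 := min_le_right _ _
    linarith
  have hq1 : 0 ≤ 1 - qhat := by have := hqhat.2; linarith
  have hq1' : 1 - qhat ≤ 1 := by have := hqhat.1; linarith
  have hnear : ∀ u' : ℝ, |u' - u| < δ₀ →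
      |(qhat + (1 - qhat) * psi u') - c| < ε/4 := by
    intro u' h
    have h2 := hδ (x := u') (by simpa [Real.dist_eq] using h)
    rw [Real.dist_eq] at h2
    have : (qhat + (1 - qhat) * psi u') - c = (1 - qhat) * (psi u' - psi u) := by
      rw [hcdef]; ring
    rw [this, abs_mul, abs_of_nonneg hq1]
    calc (1 - qhat) * |psi u' - psi u| ≤ 1 * |psi u' - psi u| :=
          mul_le_mul_of_nonneg_right hq1' (abs_nonneg _)
      _ = |psi u' - psi u| := one_mul _
      _ < ε/4 := h2
  have hδlt : δ < δ₀ := lt_of_le_of_lt (min_le_left _ _) (by linarith)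
  have hAlim : Tendsto (fun τ : ℕ => fhat^[τ] (Real.exp (-Real.exp (-(u - δ) * b ^ τ))))
      atTop (nhds (qhat + (1 - qhat) * psi (u - δ))) :=
    hpsi (u - δ) hδu _ tendsto_const_nhds
  have hBlim : Tendsto (fun τ : ℕ => fhat^[τ] (Real.exp (-Real.exp (-(u + δ) * b ^ τ))))
      atTop (nhds (qhat + (1 - qhat) * psi (u + δ))) :=
    hpsi (u + δ) (by linarith) _ tendsto_const_nhds
  have hAn := (hAlim.comp ht).eventually (Metric.ball_mem_nhds _ (by linarith : (0:ℝ) < ε/4))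
  have hBn := (hBlim.comp ht).eventually (Metric.ball_mem_nhds _ (by linarith : (0:ℝ) < ε/4))
  have hvn := hv.eventually (Metric.ball_mem_nhds u hδpos)
  rw [eventually_atTop] at hAn hBn hvn
  obtain ⟨N₁, hN₁⟩ := hAn; obtain ⟨N₂, hN₂⟩ := hBn; obtain ⟨N₃, hN₃⟩ := hvn
  refine ⟨max N₁ (max N₂ N₃), fun n hn => ?_⟩
  have h1 := hN₁ n (le_trans (le_max_left _ _) hn)
  have h2 := hN₂ n (le_trans (le_max_left _ _) (le_trans (le_max_right _ _) hn))
  have h3 := hN₃ n (le_trans (le_max_right _ _) (le_trans (le_max_right _ _) hn))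
  simp only [Metric.mem_ball, Real.dist_eq, Function.comp] at h1 h2 h3
  have hbt0 : (0:ℝ) ≤ b ^ t n := (pow_pos (by linarith) _).le
  have habs := abs_lt.mp h3
  -- sandwich
  have hlow : fhat^[t n] (Real.exp (-Real.exp (-(u - δ) * b ^ (t n)))) ≤
      fhat^[t n] (Real.exp (-Real.exp (-v n * b ^ (t n)))) := by
    apply pgf_iter_mono hphat hsum hfhat _ (hmemE _) (hmemE _)
    apply Real.exp_le_exp.mpr
    apply neg_le_neg
    apply Real.exp_le_exp.mpr
    apply mul_le_mul_of_nonneg_right _ hbt0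
    have : u - δ ≤ v n := by linarith
    linarith
  have hhigh : fhat^[t n] (Real.exp (-Real.exp (-v n * b ^ (t n)))) ≤
      fhat^[t n] (Real.exp (-Real.exp (-(u + δ) * b ^ (t n)))) := by
    apply pgf_iter_mono hphat hsum hfhat _ (hmemE _) (hmemE _)
    apply Real.exp_le_exp.mpr
    apply neg_le_neg
    apply Real.exp_le_exp.mpr
    apply mul_le_mul_of_nonneg_right _ hbt0
    have : v n ≤ u + δ := by linarith
    linarith
  have hA' := hnear (u - δ) (by rw [abs_sub_comm]; rw [abs_of_nonneg (by linarith : (0:ℝ) ≤ u - (u-δ))]; linarith)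
  have hB' := hnear (u + δ) (by rw [abs_of_nonneg (by linarith : (0:ℝ) ≤ u + δ - u)]; linarith)
  have hA'' := abs_lt.mp hA'
  have hB'' := abs_lt.mp hB'
  have hA3 := abs_lt.mp h1
  have hB3 := abs_lt.mp h2
  rw [Real.dist_eq, abs_lt]
  exact ⟨by linarith [hA''.1, hA3.1, hlow], by linarith [hB''.2, hB3.2, hhigh]⟩

end Aux2

/-- Theorem 3(b): let `fhat` be a proper pgf with infinite mean, smallest fixed
point `qhat ∈ [0,1)`. Let `b > 1` and `psi` be Darling's double-exponential limit:
continuous, strictly increasing on `(0,∞)` with values in `(0,1)`, `psi(u) → 0` as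
`u → 0+`, `psi(u) → 1` as `u → ∞`, and
`fhat^[t](exp(-exp(-u_t b^t))) → qhat + (1-qhat) psi(u)` whenever `u_t → u > 0`.
For `r > 1` set `f_r(s) = r fhat(s/r)`. If `r_n > 1`, `t_n → ∞` and
`b^{-t_n} ln(1/(r_n-1)) → y ∈ (0,∞)`, then
`P(T_n > t_n) = f_{r_n}^[t_n](1) - f_{r_n}^[t_n](0) → (1-qhat) psi(y)`, and for
`λ > 0`, `u ∈ (0,y)`, the corresponding conditional law converges to `psi(u)/psi(y)`. -/
theorem stmt_13
    (phat : ℕ → ℝ) (fhat : ℝ → ℝ) (qhat : ℝ) (b : ℝ) (psi : ℝ → ℝ)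
    (hphat : ∀ k, 0 ≤ phat k) (hsum : HasSum phat 1)
    (hfhat : ∀ s : ℝ, fhat s = ∑' k, phat k * s ^ k)
    (hmean : ¬ Summable fun k : ℕ => (k : ℝ) * phat k)
    (hqhat : qhat ∈ Set.Ico (0 : ℝ) 1) (hfix : fhat qhat = qhat)
    (hqmin : ∀ x ∈ Set.Icc (0 : ℝ) 1, fhat x = x → qhat ≤ x)
    (hb : 1 < b)
    (hpsicont : ContinuousOn psi (Set.Ioi 0))
    (hpsimono : StrictMonoOn psi (Set.Ioi 0))
    (hpsirange : ∀ u : ℝ, 0 < u → psi u ∈ Set.Ioo (0 : ℝ) 1)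
    (hpsi0 : Tendsto psi (nhdsWithin 0 (Set.Ioi 0)) (nhds 0))
    (hpsi1 : Tendsto psi atTop (nhds 1))
    (hpsi : ∀ u : ℝ, 0 < u → ∀ ut : ℕ → ℝ, Tendsto ut atTop (nhds u) →
        Tendsto
          (fun t : ℕ => fhat^[t] (Real.exp (-Real.exp (-ut t * b ^ t))))
          atTop (nhds (qhat + (1 - qhat) * psi u)))
    (r : ℕ → ℝ) (t : ℕ → ℕ) (y : ℝ)
    (hr : ∀ n, 1 < r n) (ht : Tendsto t atTop atTop) (hy : 0 < y)
    (hry : Tendsto (fun n => Real.log (1 / (r n - 1)) / b ^ t n) atTop (nhds y)) :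
    Tendsto (fun n => r n * fhat^[t n] (1 / r n) - r n * fhat^[t n] 0) atTop
      (nhds ((1 - qhat) * psi y)) ∧
    ∀ lam : ℝ, 0 < lam → ∀ u ∈ Set.Ioo (0 : ℝ) y,
      Tendsto
        (fun n =>
          (r n * fhat^[t n] (Real.exp (-lam * Real.exp (-u * b ^ t n)) / r n) -
              r n * fhat^[t n] 0) /
            (r n * fhat^[t n] (1 / r n) - r n * fhat^[t n] 0))
        atTop (nhds (psi u / psi y)) := by
  have hb0 : (0:ℝ) < b := by linarith
  have hbtpos : ∀ n, (0:ℝ) < b ^ t n := fun n => pow_pos hb0 _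
  have hbt : Tendsto (fun n => (b : ℝ) ^ t n) atTop atTop :=
    (tendsto_pow_atTop_atTop_of_one_lt hb).comp ht
  have hr1pos : ∀ n, (0:ℝ) < r n - 1 := fun n => sub_pos.mpr (hr n)
  have hlr : ∀ n, 0 < Real.log (r n) := fun n => Real.log_pos (hr n)
  -- log(1/(r n - 1)) → ∞
  have hloginf : Tendsto (fun n => Real.log (1 / (r n - 1))) atTop atTop := by
    have h1 : Tendsto (fun n => Real.log (1 / (r n - 1)) / b ^ t n * b ^ t n)
        atTop atTop := hry.pos_mul_atTop hy hbt
    refine h1.congr fun n => ?_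
    field_simp
  -- r n - 1 → 0 and r n → 1
  have hrsub : Tendsto (fun n => r n - 1) atTop (nhds 0) := by
    have heq : ∀ n, r n - 1 = Real.exp (-(Real.log (1 / (r n - 1)))) := by
      intro n
      rw [one_div, Real.log_inv, neg_neg, Real.exp_log (hr1pos n)]
    have := Real.tendsto_exp_atBot.comp (tendsto_neg_atTop_atBot.comp hloginf)
    exact this.congr fun n => (heq n).symm
  have hrlim : Tendsto r atTop (nhds 1) := by
    have := hrsub.add_const 1
    simpa using this
  -- log r n / (r n - 1) → 1
  have hlogquot : Tendsto (fun n => Real.log (r n) / (r n - 1)) atTop (nhds 1) := by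
    have hd : HasDerivAt Real.log 1 1 := by
      simpa using Real.hasDerivAt_log one_ne_zero
    have hslope := hasDerivAt_iff_tendsto_slope.mp hd
    have hrne : Tendsto r atTop (nhdsWithin 1 {x | x ≠ 1}) := by
      refine tendsto_nhdsWithin_of_tendsto_nhds_of_eventually_within _ hrlim ?_
      exact Eventually.of_forall fun n => (hr n).ne'
    have := hslope.comp hrne
    refine this.congr fun n => ?_
    simp [Function.comp, slope_def_field, Real.log_one]
  have hlogquot_log : Tendsto (fun n => Real.log (Real.log (r n) / (r n - 1)))
      atTop (nhds 0) := by
    have hc : ContinuousAt Real.log 1 := Real.continuousAt_log one_ne_zero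
    have := hc.tendsto.comp hlogquot
    simpa [Real.log_one, Function.comp_def] using this
  -- u_ n := -log(log r n) / b^t n → y
  set uu : ℕ → ℝ := fun n => -Real.log (Real.log (r n)) / b ^ t n with huudef
  have huulim : Tendsto uu atTop (nhds y) := by
    have hdecomp : ∀ n, uu n = Real.log (1 / (r n - 1)) / b ^ t n
        - Real.log (Real.log (r n) / (r n - 1)) / b ^ t n := by
      intro n
      simp only [huudef]
      have h1 : Real.log (Real.log (r n)) =
          Real.log (Real.log (r n) / (r n - 1)) + Real.log (r n - 1) := by
        rw [← Real.log_mul (div_pos (hlr n) (hr1pos n)).ne' (hr1pos n).ne', div_mul_cancel₀ _ (hr1pos n).ne']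
      rw [h1, one_div, Real.log_inv]
      field_simp
      ring
    have h2 : Tendsto (fun n => Real.log (Real.log (r n) / (r n - 1)) / b ^ t n)
        atTop (nhds 0) := hlogquot_log.div_atTop hbt
    have := hry.sub h2
    rw [sub_zero] at this
    exact this.congr fun n => (hdecomp n).symm
  -- 1/r n = exp(-exp(-uu n * b^t n))
  have huueq : ∀ n, Real.exp (-Real.exp (-uu n * b ^ t n)) = 1 / r n := by
    intro n
    have h1 : -uu n * b ^ t n = Real.log (Real.log (r n)) := by
      simp only [huudef]
      field_simp
    rw [h1, Real.exp_log (hlr n), Real.exp_neg, Real.exp_log (by linarith [hr n] : (0:ℝ) < r n),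
      one_div]
  have h0lim : Tendsto (fun n => fhat^[t n] (0:ℝ)) atTop (nhds qhat) :=
    (pgf_iter_zero_tendsto hphat hsum hfhat hqhat hfix hqmin).comp ht
  have h1lim : Tendsto (fun n => fhat^[t n] (1 / r n)) atTop
      (nhds (qhat + (1 - qhat) * psi y)) := by
    have := pgf_key hphat hsum hfhat hqhat hb hpsicont hpsi t ht hy uu huulim
    exact this.congr fun n => by rw [huueq n]
  have hDlim : Tendsto (fun n => r n * fhat^[t n] (1 / r n) - r n * fhat^[t n] 0) atTop
      (nhds ((1 - qhat) * psi y)) := by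
    have := (hrlim.mul h1lim).sub (hrlim.mul h0lim)
    have hval : (1:ℝ) * (qhat + (1 - qhat) * psi y) - 1 * qhat = (1 - qhat) * psi y := by ring
    rwa [hval] at this
  refine ⟨hDlim, fun lam hlam u hu => ?_⟩
  obtain ⟨hu0, huy⟩ := hu
  -- epsilon_n := log r n * exp(u b^t) / lam → 0
  set en : ℕ → ℝ := fun n => Real.log (r n) * Real.exp (u * b ^ t n) / lam with hendef
  have henpos : ∀ n, 0 < en n := fun n => by
    simp only [hendef]
    exact div_pos (mul_pos (hlr n) (Real.exp_pos _)) hlam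
  have henlim : Tendsto en atTop (nhds 0) := by
    -- (r n - 1) * exp(u b^t) → 0
    have hkey : Tendsto (fun n => (r n - 1) * Real.exp (u * b ^ t n)) atTop (nhds 0) := by
      have hub : ∀ᶠ n in atTop, (r n - 1) * Real.exp (u * b ^ t n) ≤
          Real.exp (-((y - u)/2) * b ^ t n) := by
        have hev : ∀ᶠ n in atTop,
            Real.log (1 / (r n - 1)) / b ^ t n > (u + y) / 2 := by
          apply hry.eventually (eventually_gt_nhds (by linarith))
        filter_upwards [hev] with n hn
        have heq : (r n - 1) * Real.exp (u * b ^ t n) =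
            Real.exp ((u - Real.log (1 / (r n - 1)) / b ^ t n) * b ^ t n) := by
          have hcan : Real.log (1 / (r n - 1)) / b ^ t n * b ^ t n =
              Real.log (1 / (r n - 1)) := div_mul_cancel₀ _ (hbtpos n).ne'
          have h1 : r n - 1 = Real.exp (-Real.log (1 / (r n - 1))) := by
            rw [one_div, Real.log_inv, neg_neg, Real.exp_log (hr1pos n)]
          conv_lhs => rw [h1]
          rw [← Real.exp_add]
          congr 1
          rw [sub_mul, hcan]
          ring
        rw [heq]
        apply Real.exp_le_exp.mpr
        apply mul_le_mul_of_nonneg_right _ (hbtpos n).le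
        linarith
      have hlb : ∀ᶠ n in atTop, 0 ≤ (r n - 1) * Real.exp (u * b ^ t n) :=
        Eventually.of_forall fun n => mul_nonneg (hr1pos n).le (Real.exp_pos _).le
      have hrhs : Tendsto (fun n => Real.exp (-((y - u)/2) * b ^ t n)) atTop (nhds 0) := by
        apply Real.tendsto_exp_atBot.comp
        have h4 : Tendsto (fun n => ((y - u)/2) * b ^ t n) atTop atTop :=
          (tendsto_const_nhds.pos_mul_atTop (by linarith : (0:ℝ) < (y-u)/2) hbt)
        have h5 := tendsto_neg_atTop_atBot.comp h4
        exact h5.congr fun n => by simp [Function.comp, neg_mul]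
      exact squeeze_zero' hlb hub hrhs
    have := (hlogquot.mul hkey).div_const lam
    rw [one_mul] at this
    have h2 : (0:ℝ) / lam = 0 := zero_div lam
    rw [h2] at this
    refine this.congr fun n => ?_
    simp only [hendef]
    have h1 : r n - 1 ≠ 0 := (hr1pos n).ne'
    have h2 : lam ≠ 0 := hlam.ne'
    field_simp
  -- w n
  set w : ℕ → ℝ := fun n =>
    -Real.log (lam * Real.exp (-u * b ^ t n) + Real.log (r n)) / b ^ t n with hwdef
  have hposarg : ∀ n, 0 < lam * Real.exp (-u * b ^ t n) + Real.log (r n) := fun n =>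
    add_pos (mul_pos hlam (Real.exp_pos _)) (hlr n)
  have hfactor : ∀ n, lam * Real.exp (-u * b ^ t n) + Real.log (r n) =
      lam * Real.exp (-u * b ^ t n) * (1 + en n) := by
    intro n
    have he : Real.exp (-u * b ^ t n) * Real.exp (u * b ^ t n) = 1 := by
      rw [← Real.exp_add, neg_mul, neg_add_cancel, Real.exp_zero]
    have hL : lam * Real.exp (-u * b ^ t n) * (1 + en n) =
        lam * Real.exp (-u * b ^ t n) +
          Real.exp (-u * b ^ t n) * Real.exp (u * b ^ t n) * Real.log (r n) * (lam / lam) := by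
      simp only [hendef]; ring
    rw [hL, he, div_self hlam.ne', one_mul, mul_one]
  have hweq : ∀ n, w n = u - (Real.log lam + Real.log (1 + en n)) / b ^ t n := by
    intro n
    simp only [hwdef]
    have h1 : Real.log (lam * Real.exp (-u * b ^ t n) + Real.log (r n)) =
        Real.log lam + (-u * b ^ t n) + Real.log (1 + en n) := by
      rw [hfactor n,
        Real.log_mul (mul_pos hlam (Real.exp_pos _)).ne'
          (by linarith [henpos n] : (0:ℝ) < 1 + en n).ne',
        Real.log_mul hlam.ne' (Real.exp_pos _).ne', Real.log_exp]
    rw [h1]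
    field_simp
    ring
  have hwlim : Tendsto w atTop (nhds u) := by
    have h1en : Tendsto (fun n => (1:ℝ) + en n) atTop (nhds 1) := by
      have := henlim.const_add 1
      simpa using this
    have hlog1en : Tendsto (fun n => Real.log (1 + en n)) atTop (nhds 0) := by
      have := (Real.continuousAt_log one_ne_zero).tendsto.comp h1en
      simpa [Real.log_one, Function.comp_def] using this
    have h2 : Tendsto (fun n => (Real.log lam + Real.log (1 + en n)) / b ^ t n)
        atTop (nhds 0) := by
      have hc : Tendsto (fun _ : ℕ => Real.log lam) atTop (nhds (Real.log lam)) :=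
        tendsto_const_nhds
      exact (hc.add hlog1en).div_atTop hbt
    have := tendsto_const_nhds.sub h2 (f := fun _ : ℕ => u)
    rw [sub_zero] at this
    exact this.congr fun n => (hweq n).symm
  have hweq2 : ∀ n, Real.exp (-Real.exp (-w n * b ^ t n)) =
      Real.exp (-lam * Real.exp (-u * b ^ t n)) / r n := by
    intro n
    have h1 : -w n * b ^ t n =
        Real.log (lam * Real.exp (-u * b ^ t n) + Real.log (r n)) := by
      simp only [hwdef]; field_simp
    rw [h1, Real.exp_log (hposarg n), neg_add, Real.exp_add]
    have h2 : Real.exp (-Real.log (r n)) = (r n)⁻¹ := by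
      rw [Real.exp_neg, Real.exp_log (by linarith [hr n] : (0:ℝ) < r n)]
    rw [h2, neg_mul]
    ring
  have hNin : Tendsto (fun n => fhat^[t n] (Real.exp (-lam * Real.exp (-u * b ^ t n)) / r n))
      atTop (nhds (qhat + (1 - qhat) * psi u)) := by
    have := pgf_key hphat hsum hfhat hqhat hb hpsicont hpsi t ht hu0 w hwlim
    exact this.congr fun n => by rw [hweq2 n]
  have hNlim : Tendsto (fun n =>
      r n * fhat^[t n] (Real.exp (-lam * Real.exp (-u * b ^ t n)) / r n) -
        r n * fhat^[t n] 0) atTop (nhds ((1 - qhat) * psi u)) := by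
    have := (hrlim.mul hNin).sub (hrlim.mul h0lim)
    have hval : (1:ℝ) * (qhat + (1 - qhat) * psi u) - 1 * qhat = (1 - qhat) * psi u := by ring
    rwa [hval] at this
  have hq1 : (0:ℝ) < 1 - qhat := by have := hqhat.2; linarith
  have hDne : (1 - qhat) * psi y ≠ 0 :=
    (mul_pos hq1 (hpsirange y hy).1).ne'
  have := hNlim.div hDlim hDne
  have hval : (1 - qhat) * psi u / ((1 - qhat) * psi y) = psi u / psi y :=
    mul_div_mul_left _ _ hq1.ne'
  rwa [hval] at this
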